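/- Let A and B be dcpos with least elements, f : A → A and g : A × B → B Scott-continuous, and define h : A × B → A × B by h(a,b) = (f(a), g(a,b)). Then lfp(h) = (lfp(f), lfp(λ b. g(lfp(f), b))), where lfp denotes the least fixed point. -/

import Mathlib

private lemma lfp_le_prefixed {B : Type*} [CompletePartialOrder B] [OrderBot B]
    (φ : B → B) (hφ : ScottContinuous φ) (b₀ : B)
    (hb : IsLeast {b | φ b = b} b₀) {c : B} (hc : φ c ≤ c) : b₀ ≤ c := by
  set u : ℕ → B := fun n => φ^[n] ⊥ with hu
  have hstep : ∀ n, u n ≤ u (n + 1) := by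
    intro n
    induction n with
    | zero => exact bot_le
    | succ n ih =>
      simp only [hu, Function.iterate_succ_apply'] at *
      exact hφ.monotone ih
  have hmono : Monotone u := monotone_nat_of_le_succ hstep
  have hdir : DirectedOn (· ≤ ·) (Set.range u) :=
    (directedOn_range (r := (· ≤ ·)) (f := u)).mpr hmono.directed_le
  have hlub : IsLUB (Set.range u) (sSup (Set.range u)) :=
    CompletePartialOrder.lubOfDirected _ hdir
  have himg : IsLUB (φ '' Set.range u) (φ (sSup (Set.range u))) :=
    hφ (Set.range_nonempty u) hdir hlub
  have himg2 : IsLUB (Set.range u) (φ (sSup (Set.range u))) := by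
    constructor
    · rintro _ ⟨n, rfl⟩
      calc u n ≤ u (n + 1) := hstep n
        _ = φ (u n) := by simp [hu, Function.iterate_succ_apply']
        _ ≤ φ (sSup (Set.range u)) := himg.1 ⟨u n, ⟨n, rfl⟩, rfl⟩
    · intro x hx
      refine himg.2 ?_
      rintro _ ⟨_, ⟨n, rfl⟩, rfl⟩
      have : φ (u n) = u (n + 1) := by simp [hu, Function.iterate_succ_apply']
      rw [this]; exact hx ⟨n + 1, rfl⟩
  have hfix : φ (sSup (Set.range u)) = sSup (Set.range u) :=
    himg2.unique hlub
  have hle : sSup (Set.range u) ≤ c := by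
    refine hlub.2 ?_
    rintro _ ⟨n, rfl⟩
    induction n with
    | zero => exact bot_le
    | succ n ih =>
      have : u (n + 1) = φ (u n) := by simp [hu, Function.iterate_succ_apply']
      rw [this]; exact (hφ.monotone ih).trans hc
  exact (hb.2 hfix).trans hle

/-- Bekić-style factoring of least fixed points: for Scott-continuous
`f : A → A` and `g : A × B → B` over pointed dcpos, with `h (a, b) = (f a, g (a, b))`,
the least fixed point of `h` is `(lfp f, lfp (fun b => g (lfp f, b)))`. -/
theorem factoring_fixpoints {A B : Type*}
    [CompletePartialOrder A] [OrderBot A] [CompletePartialOrder B] [OrderBot B]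
    (f : A → A) (g : A × B → B)
    (hf : ScottContinuous f) (hg : ScottContinuous g)
    (a₀ : A) (b₀ : B)
    (ha : IsLeast {a : A | f a = a} a₀)
    (hb : IsLeast {b : B | g (a₀, b) = b} b₀) :
    IsLeast {p : A × B | (f p.1, g p) = p} (a₀, b₀) := by
  have hφ : ScottContinuous (fun b : B => g (a₀, b)) := by
    intro d hd hdir l hl
    have him : (fun b : B => (a₀, b)) '' d |>.Nonempty := hd.image _
    have hdir2 : DirectedOn (· ≤ ·) ((fun b : B => (a₀, b)) '' d) := by
      rintro _ ⟨x, hx, rfl⟩ _ ⟨y, hy, rfl⟩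
      obtain ⟨z, hz, hxz, hyz⟩ := hdir x hx y hy
      exact ⟨(a₀, z), ⟨z, hz, rfl⟩, ⟨le_rfl, hxz⟩, ⟨le_rfl, hyz⟩⟩
    have hl2 : IsLUB ((fun b : B => (a₀, b)) '' d) (a₀, l) := by
      constructor
      · rintro _ ⟨b, hbd, rfl⟩; exact ⟨le_rfl, hl.1 hbd⟩
      · rintro ⟨x, y⟩ hxy
        obtain ⟨b, hbd⟩ := hd
        exact ⟨(hxy ⟨b, hbd, rfl⟩).1, hl.2 fun z hz => (hxy ⟨z, hz, rfl⟩).2⟩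
    have := hg him hdir2 hl2
    rwa [Set.image_image] at this
  constructor
  · show (f a₀, g (a₀, b₀)) = (a₀, b₀)
    rw [ha.1, hb.1]
  · rintro ⟨x, y⟩ hp
    have hp' : (f x, g (x, y)) = (x, y) := hp
    have h1 : f x = x := congrArg Prod.fst hp'
    have h2 : g (x, y) = y := congrArg Prod.snd hp'
    have hax : a₀ ≤ x := ha.2 h1
    have hby : b₀ ≤ y := by
      refine lfp_le_prefixed _ hφ b₀ hb ?_
      calc g (a₀, y) ≤ g (x, y) := hg.monotone ⟨hax, le_rfl⟩
        _ = y := h2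
    exact ⟨hax, hby⟩
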